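/- Let V and V' be finite nonempty types and let P and P' be X-set properties on finite subsets of V and V' respectively. Suppose φ̃ is a graph isomorphism from the P-TAR graph to the P'-TAR graph. Then R' := V' \ φ̃(V) is a P'-irrelevant set, and the map φ defined by φ(S) = φ̃(S) ⊖ R' is a graph isomorphism from the P-TAR graph to the P'-TAR graph satisfying |φ(S)| = |S| for every P-set S of V. -/

import Mathlib

/-- The TAR (token addition/removal) graph of a predicate `P` on finite subsets of `V`:
vertices are the `P`-sets, two `P`-sets being adjacent iff their symmetric difference
has exactly one element. -/
def tarGraph {V : Type*} [DecidableEq V] (P : Finset V → Prop) :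
    SimpleGraph {S : Finset V // P S} where
  Adj S T := (symmDiff S.1 T.1).card = 1
  symm := ⟨by intro S T h; rwa [symmDiff_comm]⟩
  loopless := ⟨by intro S h; simp [symmDiff_self] at h⟩

/-- `S` is a minimal `P`-set: `S` is a `P`-set and no proper subset of `S` is a `P`-set. -/
def IsMinimalPSet {V : Type*} (P : Finset V → Prop) (S : Finset V) : Prop :=
  P S ∧ ∀ T : Finset V, T ⊂ S → ¬ P T

/-- `R` is `P`-irrelevant: no minimal `P`-set contains any vertex of `R`. -/
def IsIrrelevant {V : Type*} (P : Finset V → Prop) (R : Finset V) : Prop :=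
  ∀ S : Finset V, IsMinimalPSet P S → ∀ v ∈ R, v ∉ S

private lemma card_symmDiff_eq' {α : Type*} [DecidableEq α] (S T : Finset α) :
    (symmDiff S T).card = (S \ T).card + (T \ S).card := by
  rw [symmDiff_def, Finset.sup_eq_union, Finset.card_union_of_disjoint disjoint_sdiff_sdiff]

private lemma symmDiff_univ' {α : Type*} [Fintype α] [DecidableEq α] (A : Finset α) :
    symmDiff A Finset.univ = Finset.univ \ A := by
  rw [← Finset.top_eq_univ, symmDiff_top, hnot_eq_compl, Finset.compl_eq_univ_sdiff, Finset.top_eq_univ]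

private lemma symmDiff_singleton_mem' {α : Type*} [DecidableEq α] {T : Finset α} {w : α}
    (h : w ∈ T) : symmDiff {w} T = T.erase w := by
  ext x
  simp only [Finset.mem_symmDiff, Finset.mem_singleton, Finset.mem_erase]
  constructor
  · rintro (⟨rfl, hx⟩ | ⟨hx, hx2⟩)
    · exact absurd h hx
    · exact ⟨hx2, hx⟩
  · rintro ⟨hne, hx⟩
    exact Or.inr ⟨hx, hne⟩

private lemma symmDiff_singleton_not_mem' {α : Type*} [DecidableEq α] {T : Finset α} {w : α}
    (h : w ∉ T) : symmDiff {w} T = insert w T := by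
  ext x
  simp only [Finset.mem_symmDiff, Finset.mem_singleton, Finset.mem_insert]
  constructor
  · rintro (⟨rfl, _⟩ | ⟨hx, _⟩)
    · exact Or.inl rfl
    · exact Or.inr hx
  · rintro (rfl | hx)
    · exact Or.inl ⟨rfl, h⟩
    · exact Or.inr ⟨hx, fun e => h (e ▸ hx)⟩

private lemma symmDiff_insert_self' {α : Type*} [DecidableEq α] {A : Finset α} {u : α}
    (h : u ∉ A) : symmDiff A (insert u A) = {u} := by
  rw [symmDiff_comm, ← symmDiff_singleton_not_mem' h, symmDiff_assoc, symmDiff_self,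
    symmDiff_bot]

private lemma tar_walk_lb {V : Type*} [DecidableEq V] {P : Finset V → Prop}
    {a b : {S : Finset V // P S}} (w : (tarGraph P).Walk a b) :
    (symmDiff a.1 b.1).card ≤ w.length := by
  induction w with
  | nil => simp [symmDiff_self]
  | @cons x y z h p ih =>
      have key : symmDiff x.1 z.1 = symmDiff (symmDiff x.1 y.1) (symmDiff y.1 z.1) := by
        rw [symmDiff_assoc, symmDiff_symmDiff_cancel_left]
      have h2 : (symmDiff x.1 z.1).card ≤ (symmDiff x.1 y.1).card + (symmDiff y.1 z.1).card := by
        rw [key]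
        exact le_trans (Finset.card_le_card symmDiff_le_sup) (Finset.card_union_le _ _)
      have h1 : (symmDiff x.1 y.1).card = 1 := h
      simp only [SimpleGraph.Walk.length_cons]
      omega

private lemma tar_walk_up {V : Type*} [DecidableEq V] {P : Finset V → Prop}
    (hP1 : ∀ S T : Finset V, P S → S ⊆ T → P T) :
    ∀ (k : ℕ) (S T : Finset V) (hS : P S) (hT : P T), S ⊆ T → (T \ S).card = k →
      ∃ w : (tarGraph P).Walk ⟨S, hS⟩ ⟨T, hT⟩, w.length = k := by
  intro k
  induction k with
  | zero =>
      intro S T hS hT hST hcard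
      have hTS : T = S := by
        have h1 : T \ S = ∅ := Finset.card_eq_zero.mp hcard
        apply Finset.Subset.antisymm _ hST
        intro x hx
        by_contra hxS
        have : x ∈ T \ S := Finset.mem_sdiff.mpr ⟨hx, hxS⟩
        simp [h1] at this
      subst hTS
      exact ⟨SimpleGraph.Walk.nil, rfl⟩
  | succ k ih =>
      intro S T hS hT hST hcard
      have hne : (T \ S).Nonempty := by rw [← Finset.card_pos, hcard]; omega
      obtain ⟨v, hv⟩ := hne
      have hvT : v ∈ T := (Finset.mem_sdiff.mp hv).1
      have hvS : v ∉ S := (Finset.mem_sdiff.mp hv).2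
      have hS' : P (insert v S) := hP1 _ _ hS (Finset.subset_insert _ _)
      have hsub : insert v S ⊆ T := Finset.insert_subset hvT hST
      have hcard' : (T \ insert v S).card = k := by
        rw [Finset.sdiff_insert, Finset.card_erase_of_mem hv, hcard]
        omega
      obtain ⟨w, hw⟩ := ih (insert v S) T hS' hT hsub hcard'
      have hadj : (tarGraph P).Adj ⟨S, hS⟩ ⟨insert v S, hS'⟩ := by
        show (symmDiff S (insert v S)).card = 1
        rw [symmDiff_insert_self' hvS, Finset.card_singleton]
      exact ⟨SimpleGraph.Walk.cons hadj w, by simp [hw]⟩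

private lemma tar_walk_exists {V : Type*} [DecidableEq V] {P : Finset V → Prop}
    (hP1 : ∀ S T : Finset V, P S → S ⊆ T → P T) (a b : {S : Finset V // P S}) :
    ∃ w : (tarGraph P).Walk a b, w.length = (symmDiff a.1 b.1).card := by
  obtain ⟨S, hS⟩ := a; obtain ⟨T, hT⟩ := b
  have hU : P (S ∪ T) := hP1 _ _ hS Finset.subset_union_left
  obtain ⟨w1, hw1⟩ := tar_walk_up hP1 ((S ∪ T) \ S).card S (S ∪ T) hS hU
    Finset.subset_union_left rfl
  obtain ⟨w2, hw2⟩ := tar_walk_up hP1 ((S ∪ T) \ T).card T (S ∪ T) hT hU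
    Finset.subset_union_right rfl
  refine ⟨w1.append w2.reverse, ?_⟩
  show (w1.append w2.reverse).length = (symmDiff S T).card
  rw [SimpleGraph.Walk.length_append, SimpleGraph.Walk.length_reverse, hw1, hw2,
    card_symmDiff_eq', Finset.union_sdiff_left, Finset.union_sdiff_right]
  omega

private lemma iso_symmDiff_card {V V' : Type*} [DecidableEq V] [DecidableEq V']
    {P : Finset V → Prop} {P' : Finset V' → Prop}
    (hP1 : ∀ S T : Finset V, P S → S ⊆ T → P T)
    (hP'1 : ∀ S T : Finset V', P' S → S ⊆ T → P' T)
    (ψ : tarGraph P ≃g tarGraph P') (a b : {S : Finset V // P S}) :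
    (symmDiff (ψ a).1 (ψ b).1).card = (symmDiff a.1 b.1).card := by
  apply le_antisymm
  · obtain ⟨w, hw⟩ := tar_walk_exists hP1 a b
    have := tar_walk_lb (w.map ψ.toHom)
    rwa [SimpleGraph.Walk.length_map, hw] at this
  · obtain ⟨w, hw⟩ := tar_walk_exists hP'1 (ψ a) (ψ b)
    have := tar_walk_lb ((w.map ψ.symm.toHom).copy (ψ.symm_apply_apply a) (ψ.symm_apply_apply b))
    rwa [SimpleGraph.Walk.length_copy, SimpleGraph.Walk.length_map, hw] at this

private lemma card_le_of_tarIso {V V' : Type*}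
    [Fintype V] [DecidableEq V] [Nonempty V] [Fintype V'] [DecidableEq V']
    {P : Finset V → Prop} {P' : Finset V' → Prop}
    (hP1 : ∀ S T : Finset V, P S → S ⊆ T → P T)
    (hP3 : ∀ v : V, P (Finset.univ \ {v}))
    (hP'1 : ∀ S T : Finset V', P' S → S ⊆ T → P' T)
    (ψ : tarGraph P ≃g tarGraph P') :
    Fintype.card V ≤ Fintype.card V' := by
  classical
  have hPuniv : P Finset.univ := hP1 _ _ (hP3 (Classical.arbitrary V)) (Finset.subset_univ _)
  set Uv : {S : Finset V // P S} := ⟨Finset.univ, hPuniv⟩ with hUv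
  have hvert : ∀ v : V, P (Finset.univ.erase v) := fun v => by
    rw [Finset.erase_eq]; exact hP3 v
  have hsd : ∀ v : V, symmDiff (Finset.univ.erase v) (Finset.univ : Finset V) = {v} := by
    intro v
    rw [← Finset.top_eq_univ, symmDiff_top, hnot_eq_compl, Finset.compl_erase, Finset.top_eq_univ,
      Finset.compl_univ, insert_empty_eq]
  have hone : ∀ v : V,
      (symmDiff (ψ ⟨Finset.univ.erase v, hvert v⟩).1 (ψ Uv).1).card = 1 := by
    intro v
    rw [iso_symmDiff_card hP1 hP'1]
    show (symmDiff (Finset.univ.erase v) (Finset.univ : Finset V)).card = 1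
    rw [hsd v, Finset.card_singleton]
  choose h hh using fun v => Finset.card_eq_one.mp (hone v)
  apply Fintype.card_le_of_injective h
  intro v₁ v₂ heq
  have hsdeq : symmDiff (ψ ⟨Finset.univ.erase v₁, hvert v₁⟩).1 (ψ Uv).1
      = symmDiff (ψ ⟨Finset.univ.erase v₂, hvert v₂⟩).1 (ψ Uv).1 := by
    rw [hh v₁, hh v₂, heq]
  have h2 : (ψ ⟨Finset.univ.erase v₁, hvert v₁⟩).1 = (ψ ⟨Finset.univ.erase v₂, hvert v₂⟩).1 := by
    have := congrArg (fun X => symmDiff X (ψ Uv).1) hsdeq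
    simpa only [symmDiff_symmDiff_cancel_right] using this
  have h3 := ψ.toEquiv.injective (Subtype.ext h2)
  have h4 : Finset.univ.erase v₁ = Finset.univ.erase v₂ := congrArg Subtype.val h3
  by_contra hne
  have hv1 : v₁ ∈ Finset.univ.erase v₂ := Finset.mem_erase.mpr ⟨hne, Finset.mem_univ _⟩
  rw [← h4] at hv1
  exact (Finset.mem_erase.mp hv1).1 rfl

/-- If `P` and `P'` are X-set properties and `φ̃` is an isomorphism from the `P`-TAR
graph to the `P'`-TAR graph, then `R' = V' \ φ̃(V)` is `P'`-irrelevant and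
`φ = ν_{R'} ∘ φ̃` is an isomorphism with `|φ(S)| = |S|` for every `P`-set `S`. -/
theorem iso_irrelevant_correction {V V' : Type*}
    [Fintype V] [DecidableEq V] [Nonempty V]
    [Fintype V'] [DecidableEq V'] [Nonempty V']
    (P : Finset V → Prop) (P' : Finset V' → Prop)
    (hP1 : ∀ S T : Finset V, P S → S ⊆ T → P T)
    (hP2 : ¬ P ∅)
    (hP3 : ∀ v : V, P (Finset.univ \ {v}))
    (hP'1 : ∀ S T : Finset V', P' S → S ⊆ T → P' T)
    (hP'2 : ¬ P' ∅)
    (hP'3 : ∀ v : V', P' (Finset.univ \ {v}))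
    (φt : tarGraph P ≃g tarGraph P') :
    IsIrrelevant P'
      (Finset.univ \
        (φt ⟨Finset.univ,
          hP1 _ _ (hP3 (Classical.arbitrary V)) (Finset.subset_univ _)⟩).1) ∧
    ∃ φ : tarGraph P ≃g tarGraph P',
      ∀ S : {S : Finset V // P S},
        (φ S).1 = symmDiff (φt S).1
          (Finset.univ \
            (φt ⟨Finset.univ,
              hP1 _ _ (hP3 (Classical.arbitrary V)) (Finset.subset_univ _)⟩).1) ∧
        (φ S).1.card = S.1.card := by
  classical
  set Uv : {S : Finset V // P S} :=
    ⟨Finset.univ, hP1 _ _ (hP3 (Classical.arbitrary V)) (Finset.subset_univ _)⟩ with hUv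
  set W : Finset V' := (φt Uv).1 with hWdef
  set R' : Finset V' := Finset.univ \ W with hR'def
  have M := iso_symmDiff_card hP1 hP'1 φt
  have fact1' : ∀ S : {S : Finset V // P S},
      (symmDiff (φt S).1 W).card + S.1.card = Fintype.card V := by
    intro S
    have hM := M S Uv
    have hM' : (symmDiff (φt S).1 W).card
        = (symmDiff S.1 (Finset.univ : Finset V)).card := hM
    rw [hM', symmDiff_univ', ← Finset.card_univ]
    exact Finset.card_sdiff_add_card_eq_card (Finset.subset_univ _)
  have fact1 : ∀ T : {S : Finset V' // P' S},
      (symmDiff T.1 W).card + ((φt.symm T).1).card = Fintype.card V := by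
    intro T
    have := fact1' (φt.symm T)
    rwa [φt.apply_symm_apply] at this
  -- Claim C: removing a vertex of R' from a P'-set keeps it a P'-set
  have claimC : ∀ v ∈ R', ∀ T : Finset V', P' T → v ∈ T → P' (T.erase v) := by
    intro v hvR' T hT hvT
    by_contra hnot
    have hvW : v ∉ W := (Finset.mem_sdiff.mp hvR').2
    set t : {S : Finset V' // P' S} := ⟨T, hT⟩ with ht
    set a := φt.symm t with ha
    set k := (symmDiff T W).card with hk
    have hmk : k + a.1.card = Fintype.card V := fact1 t
    have hvTW : v ∈ T \ W := Finset.mem_sdiff.mpr ⟨hvT, hvW⟩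
    have hk1 : 1 ≤ (T \ W).card := Finset.card_pos.mpr ⟨v, hvTW⟩
    have hksplit : k = (T \ W).card + (W \ T).card := card_symmDiff_eq' T W
    set D : Finset V := Finset.univ \ a.1 with hD
    have hDcard : D.card = k := by
      rw [hD, Finset.card_sdiff_of_subset (Finset.subset_univ _), Finset.card_univ]
      omega
    set F : V → Finset V' := fun u =>
      (φt ⟨insert u a.1, hP1 _ _ a.2 (Finset.subset_insert _ _)⟩).1 with hF
    set C : Finset (Finset V') :=
      ((W \ T).image fun w => insert w T) ∪ (((T \ W).erase v).image fun w => T.erase w)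
      with hC
    have hCcard : C.card ≤ (W \ T).card + ((T \ W).card - 1) := by
      refine le_trans (Finset.card_union_le _ _) (add_le_add Finset.card_image_le ?_)
      exact le_trans Finset.card_image_le (le_of_eq (Finset.card_erase_of_mem hvTW))
    have hmem : ∀ u ∈ D, F u ∈ C := by
      intro u hu
      have hua : u ∉ a.1 := (Finset.mem_sdiff.mp hu).2
      have hb1 : (symmDiff (F u) T).card = 1 := by
        have h := M ⟨insert u a.1, hP1 _ _ a.2 (Finset.subset_insert _ _)⟩ a
        rw [show φt a = t from φt.apply_symm_apply t] at h
        rw [symmDiff_comm (insert u a.1) a.1, symmDiff_insert_self' hua,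
          Finset.card_singleton] at h
        exact h
      have hb2 : (symmDiff (F u) W).card = k - 1 := by
        have h2 := fact1' ⟨insert u a.1, hP1 _ _ a.2 (Finset.subset_insert _ _)⟩
        have h2' : (symmDiff (F u) W).card + (insert u a.1).card = Fintype.card V := h2
        rw [Finset.card_insert_of_notMem hua] at h2'
        omega
      obtain ⟨w, hw⟩ := Finset.card_eq_one.mp hb1
      have hXw : F u = symmDiff {w} T := by
        rw [← hw, symmDiff_symmDiff_cancel_right]
      have hwsplit : symmDiff (F u) W = symmDiff {w} (symmDiff T W) := by
        rw [hXw, symmDiff_assoc]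
      have hwTW : w ∈ symmDiff T W := by
        by_contra hnw
        have hcontra : (symmDiff (F u) W).card = k + 1 := by
          rw [hwsplit, symmDiff_singleton_not_mem' hnw,
            Finset.card_insert_of_notMem hnw, ← hk]
        omega
      have hPFu : P' (F u) :=
        (φt ⟨insert u a.1, hP1 _ _ a.2 (Finset.subset_insert _ _)⟩).2
      by_cases hwT : w ∈ T
      · have hFu : F u = T.erase w := by rw [hXw, symmDiff_singleton_mem' hwT]
        have hwW : w ∉ W := by
          rcases Finset.mem_symmDiff.mp hwTW with ⟨_, h⟩ | ⟨_, h⟩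
          · exact h
          · exact absurd hwT h
        have hwv : w ≠ v := by
          rintro rfl
          rw [hFu] at hPFu
          exact hnot hPFu
        refine Finset.mem_union_right _ (Finset.mem_image.mpr ⟨w, ?_, hFu.symm⟩)
        exact Finset.mem_erase.mpr ⟨hwv, Finset.mem_sdiff.mpr ⟨hwT, hwW⟩⟩
      · have hFu : F u = insert w T := by rw [hXw, symmDiff_singleton_not_mem' hwT]
        have hwW : w ∈ W := by
          rcases Finset.mem_symmDiff.mp hwTW with ⟨h1, _⟩ | ⟨h1, _⟩
          · exact absurd h1 hwT
          · exact h1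
        exact Finset.mem_union_left _
          (Finset.mem_image.mpr ⟨w, Finset.mem_sdiff.mpr ⟨hwW, hwT⟩, hFu.symm⟩)
    have hinj : Set.InjOn F ↑D := by
      intro u₁ hu₁ u₂ hu₂ heq
      have h1 : u₁ ∉ a.1 := (Finset.mem_sdiff.mp (Finset.mem_coe.mp hu₁)).2
      have hveq : φt ⟨insert u₁ a.1, hP1 _ _ a.2 (Finset.subset_insert _ _)⟩
          = φt ⟨insert u₂ a.1, hP1 _ _ a.2 (Finset.subset_insert _ _)⟩ := Subtype.ext heq
      have h3 := φt.toEquiv.injective hveq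
      have hseq : insert u₁ a.1 = insert u₂ a.1 := congrArg Subtype.val h3
      have hmem1 : u₁ ∈ insert u₂ a.1 := hseq ▸ Finset.mem_insert_self u₁ a.1
      rcases Finset.mem_insert.mp hmem1 with h | h
      · exact h
      · exact absurd h h1
    have hle := Finset.card_le_card_of_injOn F hmem hinj
    rw [hDcard] at hle
    omega
  -- irrelevance
  have hirr : IsIrrelevant P' R' := by
    intro S hS v hv hvS
    exact hS.2 (S.erase v) (Finset.erase_ssubset hvS) (claimC v hv S hS.1 hvS)
  -- removing any subset of R' preserves P'
  have hC2 : ∀ B : Finset V', B ⊆ R' → ∀ T : Finset V', P' T → P' (T \ B) := by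
    intro B
    induction B using Finset.induction_on with
    | empty => intro _ T hT; simpa using hT
    | @insert b B hbB ih =>
        intro hsub T hT
        rw [Finset.sdiff_insert]
        have hTB : P' (T \ B) := ih (fun x hx => hsub (Finset.mem_insert_of_mem hx)) T hT
        by_cases hb : b ∈ T \ B
        · exact claimC b (hsub (Finset.mem_insert_self _ _)) _ hTB hb
        · rwa [Finset.erase_eq_self.mpr hb]
  have hν : ∀ T : {S : Finset V' // P' S}, P' (symmDiff T.1 R') := by
    intro T
    rw [symmDiff_eq_sup_sdiff_inf, Finset.sup_eq_union, Finset.inf_eq_inter]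
    exact hC2 _ Finset.inter_subset_right _ (hP'1 _ _ T.2 Finset.subset_union_left)
  have hnn : Fintype.card V = Fintype.card V' :=
    le_antisymm (card_le_of_tarIso hP1 hP3 hP'1 φt) (card_le_of_tarIso hP'1 hP'3 hP1 φt.symm)
  have hcancel : ∀ x y : Finset V',
      symmDiff (symmDiff x R') (symmDiff y R') = symmDiff x y := by
    intro x y
    rw [symmDiff_assoc, symmDiff_comm y R', symmDiff_symmDiff_cancel_left]
  let νe : {S : Finset V' // P' S} ≃ {S : Finset V' // P' S} :=
    { toFun := fun T => ⟨symmDiff T.1 R', hν T⟩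
      invFun := fun T => ⟨symmDiff T.1 R', hν T⟩
      left_inv := fun T => Subtype.ext
        (by show symmDiff (symmDiff T.1 R') R' = T.1
            rw [symmDiff_assoc, symmDiff_self, symmDiff_bot])
      right_inv := fun T => Subtype.ext
        (by show symmDiff (symmDiff T.1 R') R' = T.1
            rw [symmDiff_assoc, symmDiff_self, symmDiff_bot]) }
  let νiso : tarGraph P' ≃g tarGraph P' :=
    { νe with
      map_rel_iff' := by
        intro x y
        show (symmDiff (symmDiff x.1 R') (symmDiff y.1 R')).card = 1
          ↔ (symmDiff x.1 y.1).card = 1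
        rw [hcancel] }
  refine ⟨hirr, φt.trans νiso, fun S => ⟨rfl, ?_⟩⟩
  show (symmDiff (φt S).1 R').card = S.1.card
  have hXR : symmDiff (φt S).1 R' = Finset.univ \ (symmDiff (φt S).1 W) := by
    rw [hR'def, ← symmDiff_univ' W, ← symmDiff_assoc, symmDiff_univ']
  have h1 := fact1' S
  have h2 : (Finset.univ \ (symmDiff (φt S).1 W)).card
      = Fintype.card V' - (symmDiff (φt S).1 W).card := by
    rw [Finset.card_sdiff_of_subset (Finset.subset_univ _), Finset.card_univ]
  rw [hXR, h2]
  omega
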